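/- For every page request sequence z partitioned into b blocks with respect to cache size k (each block containing at most k distinct pages, each block maximal), and for every cache size h ≤ k, any algorithm serving z with a cache of size h incurs at least (b−1)(k−h+1) page faults. -/

import Mathlib

/-- A (demand-)paging schedule for cache size `h` serving the request
sequence `z`: `cache i` is the cache contents just before serving the `i`-th
request.  The cache starts empty, never holds more than `h` pages, the
requested page is in the cache after serving it, and pages enter the cache
only when requested. -/
structure PagingSchedule (h : ℕ) (z : List ℕ) where
  cache : ℕ → Finset ℕ
  init : cache 0 = ∅
  card_le : ∀ i, (cache i).card ≤ h
  serves : ∀ i, i < z.length → z.getD i 0 ∈ cache (i + 1)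
  moves : ∀ i, i < z.length → cache (i + 1) ⊆ cache i ∪ {z.getD i 0}

/-- The number of page faults incurred by a paging schedule on `z`. -/
def schedFaults {h : ℕ} {z : List ℕ} (S : PagingSchedule h z) : ℕ :=
  ((List.range z.length).filter
    fun i => decide (z.getD i 0 ∉ S.cache i)).length

/-- The minimum number of page faults needed to serve `z` with a cache of
size `h` (the performance of the optimal offline algorithm). -/
noncomputable def optFaults (h : ℕ) (z : List ℕ) : ℕ :=
  sInf {n | ∃ S : PagingSchedule h z, schedFaults S = n}

/-- `B` is the (greedy) block partition of `z` with respect to cache size `k`. -/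
structure IsBlockPartition (k : ℕ) (z : List ℕ) (B : List (List ℕ)) : Prop where
  join_eq : B.flatten = z
  nonempty : ∀ blk ∈ B, blk ≠ []
  distinct_le : ∀ blk ∈ B, blk.dedup.length ≤ k
  maximal : ∀ i, i + 1 < B.length →
    ((B.getD i []) ++ [(B.getD (i + 1) []).headI]).dedup.length = k + 1


/-! Auxiliary definitions and lemmas -/

def blkStart (B : List (List ℕ)) (i : ℕ) : ℕ := ((B.take i).map List.length).sum

lemma sum_take_le (l : List ℕ) (n : ℕ) : (l.take n).sum ≤ l.sum := by
  conv_rhs => rw [← List.take_append_drop n l]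
  rw [List.sum_append]
  exact Nat.le_add_right _ _

lemma blkStart_eq (B : List (List ℕ)) (i : ℕ) :
    blkStart B i = ((B.map List.length).take i).sum := by
  rw [blkStart, List.map_take]

lemma blkStart_mono (B : List (List ℕ)) {i j : ℕ} (hij : i ≤ j) :
    blkStart B i ≤ blkStart B j := by
  rw [blkStart_eq, blkStart_eq]
  have h1 : (B.map List.length).take i = ((B.map List.length).take j).take i := by
    rw [List.take_take, Nat.min_eq_left hij]
  rw [h1]
  exact sum_take_le _ _

lemma blkStart_succ (B : List (List ℕ)) {i : ℕ} (hi : i < B.length) :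
    blkStart B (i + 1) = blkStart B i + (B.getD i []).length := by
  rw [blkStart_eq, blkStart_eq, List.take_succ,
    List.getElem?_eq_getElem (by simpa using hi), List.getD_eq_getElem _ _ hi]
  simp

lemma blkStart_le (B : List (List ℕ)) (i : ℕ) : blkStart B i ≤ B.flatten.length := by
  rw [blkStart_eq, List.length_flatten]
  exact sum_take_le _ _

lemma drop_blkStart (i : ℕ) : ∀ (B : List (List ℕ)),
    B.flatten.drop (blkStart B i) = (B.drop i).flatten := by
  induction i with
  | zero => intro B; simp [blkStart]
  | succ i ih =>
    intro B
    cases B with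
    | nil => simp [blkStart]
    | cons blk B' =>
      simp only [blkStart, List.take_succ_cons, List.map_cons, List.sum_cons,
        List.flatten_cons, List.drop_succ_cons]
      rw [List.drop_append, List.drop_eq_nil_of_le (by omega), Nat.add_sub_cancel_left,
        List.nil_append]
      exact ih B'

lemma getD_drop' (l : List ℕ) (n m : ℕ) (h : n + m < l.length) :
    (l.drop n).getD m 0 = l.getD (n + m) 0 := by
  rw [List.getD_eq_getElem _ _ (by simp; omega), List.getD_eq_getElem _ _ h]
  simp

lemma getD_append_left' (l1 l2 : List ℕ) (m : ℕ) (h : m < l1.length) :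
    (l1 ++ l2).getD m 0 = l1.getD m 0 := by
  rw [List.getD_eq_getElem _ _ (by simp; omega), List.getD_eq_getElem _ _ h]
  exact List.getElem_append_left h

lemma getD_blkStart {B : List (List ℕ)} {i m : ℕ} (hi : i < B.length)
    (hm : m < (B.getD i []).length) :
    B.flatten.getD (blkStart B i + m) 0 = (B.getD i []).getD m 0 := by
  have h1 : B.flatten.drop (blkStart B i) = (B.getD i []) ++ (B.drop (i + 1)).flatten := by
    rw [drop_blkStart, List.drop_eq_getElem_cons hi, List.flatten_cons,
      List.getD_eq_getElem _ _ hi]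
  have hlt : blkStart B i + m < B.flatten.length := by
    have h2 := blkStart_succ B hi
    have h3 := blkStart_le B (i + 1)
    omega
  rw [← getD_drop' _ _ _ hlt, h1, getD_append_left' _ _ _ hm]

lemma headI_eq_getD {l : List ℕ} (hl : l ≠ []) : l.headI = l.getD 0 0 := by
  cases l with
  | nil => exact absurd rfl hl
  | cons a l => rfl

lemma getD_mem' {B : List (List ℕ)} {i : ℕ} (hi : i < B.length) : B.getD i [] ∈ B := by
  rw [List.getD_eq_getElem _ _ hi]
  exact List.getElem_mem _
lemma persist {h : ℕ} {z : List ℕ} (S : PagingSchedule h z) {p m n : ℕ}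
    (hmn : m ≤ n) (hn : n ≤ z.length) (hp : p ∉ S.cache m)
    (hreq : ∀ j, m ≤ j → j < n → z.getD j 0 ≠ p) : p ∉ S.cache n := by
  induction n, hmn using Nat.le_induction with
  | base => exact hp
  | succ n hmn ih =>
    have hn' : p ∉ S.cache n :=
      ih (by omega) (fun j hj1 hj2 => hreq j hj1 (by omega))
    intro hmem
    rcases Finset.mem_union.1 (S.moves n (by omega) hmem) with hc | hc
    · exact hn' hc
    · exact hreq n (by omega) (by omega) (Finset.mem_singleton.1 hc).symm

lemma blkStart_lt_length {k : ℕ} {z : List ℕ} {B : List (List ℕ)}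
    (hB : IsBlockPartition k z B) {i : ℕ} (hi : i < B.length) :
    blkStart B i < z.length := by
  have h1 := blkStart_succ B hi
  have h2 := blkStart_le B (i + 1)
  have hne : (B.getD i []) ≠ [] := hB.nonempty _ (getD_mem' hi)
  have h3 : 1 ≤ (B.getD i []).length := List.length_pos_iff.2 hne
  rw [hB.join_eq] at h2
  omega

lemma interval_bound (k h : ℕ) (hhk : h ≤ k)
    (z : List ℕ) (B : List (List ℕ)) (hB : IsBlockPartition k z B)
    (S : PagingSchedule h z) (i : ℕ) (hi : i + 1 < B.length) :
    k - h + 1 ≤ ((Finset.Ioc (blkStart B i) (blkStart B (i + 1))).filter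
      (fun j => z.getD j 0 ∉ S.cache j)).card := by
  classical
  have hz := hB.join_eq
  set t := blkStart B i with ht
  set t' := blkStart B (i + 1) with ht'
  have hbi : i < B.length := by omega
  have hblkne : B.getD i [] ≠ [] := hB.nonempty _ (getD_mem' hbi)
  have hnblkne : B.getD (i + 1) [] ≠ [] := hB.nonempty _ (getD_mem' hi)
  have hblen : 1 ≤ (B.getD i []).length := List.length_pos_iff.2 hblkne
  have hnblen : 1 ≤ (B.getD (i + 1) []).length := List.length_pos_iff.2 hnblkne
  have htt' : t' = t + (B.getD i []).length := blkStart_succ B hbi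
  have ht'len : t' < z.length := blkStart_lt_length hB hi
  have htlt : t < t' := by omega
  have hzt : z.getD t 0 = (B.getD i []).headI := by
    rw [← hz, headI_eq_getD hblkne]
    simpa using getD_blkStart hbi (show 0 < (B.getD i []).length by omega)
  have hzt' : z.getD t' 0 = (B.getD (i + 1) []).headI := by
    rw [← hz, headI_eq_getD hnblkne, ht']
    simpa using getD_blkStart hi (show 0 < (B.getD (i + 1) []).length by omega)
  set D := ((B.getD i []) ++ [(B.getD (i + 1) []).headI]).toFinset with hDdef
  have hD : D.card = k + 1 := by rw [hDdef, List.card_toFinset, hB.maximal i hi]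
  set C := S.cache (t + 1) with hC
  have hqC : z.getD t 0 ∈ C := S.serves t (by omega)
  set E := D \ C with hEdef
  have hEcard : k + 1 - h ≤ E.card := by
    have h1 : D.card - C.card ≤ E.card := Finset.le_card_sdiff C D
    have h2 := S.card_le (t + 1)
    rw [← hC] at h2
    omega
  set J : ℕ → Finset ℕ :=
    fun p => (Finset.Ioc t t').filter (fun j => z.getD j 0 = p) with hJ
  have hocc : ∀ p ∈ E, (J p).Nonempty := by
    intro p hp
    obtain ⟨hpD, hpC⟩ := Finset.mem_sdiff.1 hp
    rw [hDdef, List.mem_toFinset, List.mem_append] at hpD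
    rcases hpD with hpb | hph
    · obtain ⟨m, hm, hpm⟩ := List.getElem_of_mem hpb
      rcases Nat.eq_zero_or_pos m with rfl | hm0
      · exfalso
        apply hpC
        have hpq : p = z.getD t 0 := by
          rw [hzt, headI_eq_getD hblkne, List.getD_eq_getElem _ _ hm]
          exact hpm.symm
        rw [hpq]
        exact hqC
      · refine ⟨t + m, Finset.mem_filter.2 ⟨Finset.mem_Ioc.2 ⟨by omega, by omega⟩, ?_⟩⟩
        rw [← hz, getD_blkStart hbi hm, List.getD_eq_getElem _ _ hm, hpm]
    · refine ⟨t', Finset.mem_filter.2 ⟨Finset.mem_Ioc.2 ⟨htlt, le_refl _⟩, ?_⟩⟩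
      rw [hzt']
      exact (List.mem_singleton.1 hph).symm
  set f : ℕ → ℕ := fun p => if hp : (J p).Nonempty then (J p).min' hp else 0 with hf
  have hfJ : ∀ p ∈ E, f p ∈ J p := by
    intro p hp
    simp only [hf, dif_pos (hocc p hp)]
    exact Finset.min'_mem _ _
  have hfmin : ∀ p ∈ E, ∀ j ∈ J p, f p ≤ j := by
    intro p hp j hj
    simp only [hf, dif_pos (hocc p hp)]
    exact Finset.min'_le _ _ hj
  have key : ∀ p ∈ E, f p ∈ (Finset.Ioc t t').filter (fun j => z.getD j 0 ∉ S.cache j) := by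
    intro p hp
    obtain ⟨hio, hzf⟩ := Finset.mem_filter.1 (hfJ p hp)
    obtain ⟨h1, h2⟩ := Finset.mem_Ioc.1 hio
    refine Finset.mem_filter.2 ⟨hio, ?_⟩
    rw [hzf]
    refine persist S (show t + 1 ≤ f p by omega) (by omega)
      (Finset.mem_sdiff.1 hp).2 ?_
    intro j hj1 hj2 hzj
    have hjJ : j ∈ J p :=
      Finset.mem_filter.2 ⟨Finset.mem_Ioc.2 ⟨by omega, by omega⟩, hzj⟩
    exact absurd (hfmin p hp j hjJ) (by omega)
  have hinj : Set.InjOn f E := by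
    intro p hp p' hp' hpp
    have h1 := (Finset.mem_filter.1 (hfJ p hp)).2
    have h2 := (Finset.mem_filter.1 (hfJ p' hp')).2
    rw [← h1, ← h2, hpp]
  have hcard := Finset.card_le_card_of_injOn f key hinj
  omega

/-- Any algorithm serving `z` with a cache of size `h ≤ k` incurs at least
`(b - 1) * (k - h + 1)` page faults, where `b` is the number of blocks in the
block partition of `z` with respect to `k`. -/
theorem faults_lower_bound (k h : ℕ) (hh : 1 ≤ h) (hhk : h ≤ k)
    (z : List ℕ) (B : List (List ℕ)) (hB : IsBlockPartition k z B)
    (S : PagingSchedule h z) :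
    (B.length - 1) * (k - h + 1) ≤ schedFaults S := by
  classical
  rcases Nat.lt_or_ge B.length 2 with hb | hb
  · have hb1 : B.length - 1 = 0 := by omega
    simp [hb1]
  set b := B.length with hbdef
  set Flt : Finset ℕ :=
    (Finset.range z.length).filter (fun j => z.getD j 0 ∉ S.cache j) with hFlt
  have hsched : schedFaults S = Flt.card := rfl
  set G : ℕ → Finset ℕ := fun i =>
    (Finset.Ioc (blkStart B i) (blkStart B (i + 1))).filter
      (fun j => z.getD j 0 ∉ S.cache j) with hG
  have hsub : ∀ i ∈ Finset.range (b - 1), G i ⊆ Flt := by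
    intro i hi j hj
    obtain ⟨hio, hf⟩ := Finset.mem_filter.1 hj
    obtain ⟨h1, h2⟩ := Finset.mem_Ioc.1 hio
    have h3 : blkStart B (i + 1) < z.length :=
      blkStart_lt_length hB (by simp only [Finset.mem_range] at hi; omega)
    exact Finset.mem_filter.2 ⟨Finset.mem_range.2 (by omega), hf⟩
  have hdisj : ∀ x ∈ Finset.range (b - 1), ∀ y ∈ Finset.range (b - 1),
      x ≠ y → Disjoint (G x) (G y) := by
    have key : ∀ x y, x < y → Disjoint (G x) (G y) := by
      intro x y hxy
      refine Finset.disjoint_left.2 ?_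
      intro a hax hay
      have h1 := Finset.mem_Ioc.1 (Finset.mem_filter.1 hax).1
      have h2 := Finset.mem_Ioc.1 (Finset.mem_filter.1 hay).1
      have h3 := blkStart_mono B (show x + 1 ≤ y by omega)
      omega
    intro x _ y _ hxy
    rcases Nat.lt_or_ge x y with hlt | hge
    · exact key x y hlt
    · exact (key y x (by omega)).symm
  have hcard : ∑ i ∈ Finset.range (b - 1), (G i).card
      = ((Finset.range (b - 1)).biUnion G).card := (Finset.card_biUnion hdisj).symm
  have hle : ((Finset.range (b - 1)).biUnion G).card ≤ Flt.card :=
    Finset.card_le_card (Finset.biUnion_subset.2 hsub)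
  have hlow : ∀ i ∈ Finset.range (b - 1), k - h + 1 ≤ (G i).card := by
    intro i hi
    exact interval_bound k h hhk z B hB S i
      (by simp only [Finset.mem_range] at hi; omega)
  calc (b - 1) * (k - h + 1)
      = ∑ _i ∈ Finset.range (b - 1), (k - h + 1) := by
        rw [Finset.sum_const, Finset.card_range, smul_eq_mul]
    _ ≤ ∑ i ∈ Finset.range (b - 1), (G i).card := Finset.sum_le_sum hlow
    _ ≤ Flt.card := by rw [hcard]; exact hle
    _ = schedFaults S := hsched.symm
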